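/- Fix v ∈ {±1}^d, an integer threshold t, and T ⊆ {1,…,d}. Then the Fourier coefficient of f_v at T satisfies E[f_v(x)·χ_T(x)] = χ_T(v)·(−1)^{|T|}·2^{−d}·Σ_{s=t}^{d} C(d,s)·K(d, s, |T|), where χ_T(x) := Π_{i ∈ T} xᵢ. -/

import Mathlib

/-- The ±1 value of a hypercube coordinate encoded by a boolean. -/
def sgnB (b : Bool) : ℤ := if b then 1 else -1

/-- Inner product `v·x` of two vertices of the hypercube `{±1}^d`. -/
def dotB {d : ℕ} (v x : Fin d → Bool) : ℤ := ∑ i, sgnB (v i) * sgnB (x i)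

/-- `f_v(x) = 1{v·x ≥ 2t − d}`, real valued. -/
noncomputable def fv {d : ℕ} (t : ℕ) (v x : Fin d → Bool) : ℝ :=
  if 2 * (t : ℤ) - d ≤ dotB v x then 1 else 0

/-- The normalized Kravchuk polynomial
`K(n, a, b) = (1/(C(n,a)·C(n,b))) · Σ_{A,B ⊆ [n], |A|=a, |B|=b} (−1)^{|A ∩ B|}`. -/
noncomputable def krav (n a b : ℕ) : ℝ :=
  (∑ A ∈ Finset.powersetCard a (Finset.univ : Finset (Fin n)),
      ∑ B ∈ Finset.powersetCard b (Finset.univ : Finset (Fin n)),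
        (-1 : ℝ) ^ (A ∩ B).card) /
    ((n.choose a) * (n.choose b))

open Finset

variable {d : ℕ}

lemma sum_inter_card_eq (s : ℕ) (B B' : Finset (Fin d)) (hB : B.card = B'.card) :
    ∑ A ∈ powersetCard s (univ : Finset (Fin d)), (-1 : ℝ) ^ (A ∩ B).card =
    ∑ A ∈ powersetCard s (univ : Finset (Fin d)), (-1 : ℝ) ^ (A ∩ B').card := by
  classical
  set e : {x // x ∈ B} ≃ {x // x ∈ B'} := Finset.equivOfCardEq hB with he
  set σ : Equiv.Perm (Fin d) := e.extendSubtype with hσ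
  have hmem : ∀ x : Fin d, σ x ∈ B' ↔ x ∈ B := by
    intro x
    constructor
    · intro hx
      by_contra hxB
      exact e.extendSubtype_not_mem x hxB hx
    · intro hx
      exact e.extendSubtype_mem x hx
  refine Finset.sum_bij' (fun A _ => A.image σ) (fun A _ => A.image σ.symm) ?_ ?_ ?_ ?_ ?_
  · intro A hA
    rw [mem_powersetCard_univ] at hA ⊢
    rw [Finset.card_image_of_injective _ σ.injective, hA]
  · intro A hA
    rw [mem_powersetCard_univ] at hA ⊢
    rw [Finset.card_image_of_injective _ σ.symm.injective, hA]
  · intro A _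
    simp [Finset.image_image]
  · intro A _
    simp [Finset.image_image]
  · intro A _
    have himg : A.image σ ∩ B' = (A ∩ B).image σ := by
      ext y
      simp only [Finset.mem_inter, Finset.mem_image]
      constructor
      · rintro ⟨⟨x, hxA, rfl⟩, hyB⟩
        exact ⟨x, ⟨hxA, (hmem x).1 hyB⟩, rfl⟩
      · rintro ⟨x, ⟨hxA, hxB⟩, rfl⟩
        exact ⟨⟨x, hxA, rfl⟩, (hmem x).2 hxB⟩
    rw [himg, Finset.card_image_of_injective _ σ.injective]

lemma choose_mul_krav (s : ℕ) (hs : s ≤ d) (T : Finset (Fin d)) :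
    (d.choose s : ℝ) * krav d s T.card =
      ∑ A ∈ powersetCard s (univ : Finset (Fin d)), (-1 : ℝ) ^ (A ∩ T).card := by
  classical
  have hTd : T.card ≤ d := by
    simpa using Finset.card_le_card (Finset.subset_univ T)
  have hnum : (∑ A ∈ powersetCard s (univ : Finset (Fin d)),
      ∑ B ∈ powersetCard T.card (univ : Finset (Fin d)), (-1 : ℝ) ^ (A ∩ B).card)
      = (d.choose T.card : ℝ) *
        ∑ A ∈ powersetCard s (univ : Finset (Fin d)), (-1 : ℝ) ^ (A ∩ T).card := by
    rw [Finset.sum_comm]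
    have : ∀ B ∈ powersetCard T.card (univ : Finset (Fin d)),
        (∑ A ∈ powersetCard s (univ : Finset (Fin d)), (-1 : ℝ) ^ (A ∩ B).card)
        = ∑ A ∈ powersetCard s (univ : Finset (Fin d)), (-1 : ℝ) ^ (A ∩ T).card := by
      intro B hBc
      exact sum_inter_card_eq s B T (by rw [mem_powersetCard_univ] at hBc; rw [hBc])
    rw [Finset.sum_congr rfl this, Finset.sum_const, Finset.card_powersetCard,
      Finset.card_univ, Fintype.card_fin, nsmul_eq_mul]
  have h1 : (d.choose s : ℝ) ≠ 0 := by
    exact_mod_cast Nat.choose_pos hs |>.ne'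
  have h2 : (d.choose T.card : ℝ) ≠ 0 := by
    exact_mod_cast Nat.choose_pos hTd |>.ne'
  rw [krav, hnum]
  field_simp

lemma neg_pow_mul_G (s : ℕ) (hs : s ≤ d) (T : Finset (Fin d)) :
    (-1 : ℝ) ^ T.card *
        ∑ A ∈ powersetCard s (univ : Finset (Fin d)), (-1 : ℝ) ^ (A ∩ T).card =
      ∑ A ∈ powersetCard (d - s) (univ : Finset (Fin d)), (-1 : ℝ) ^ (A ∩ T).card := by
  classical
  rw [Finset.mul_sum]
  refine Finset.sum_bij' (fun A _ => Aᶜ) (fun A _ => Aᶜ) ?_ ?_ ?_ ?_ ?_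
  · intro A hA
    rw [mem_powersetCard_univ] at hA ⊢
    rw [Finset.card_compl, Fintype.card_fin, hA]
  · intro A hA
    rw [mem_powersetCard_univ] at hA ⊢
    rw [Finset.card_compl, Fintype.card_fin, hA]
    omega
  · intro A _; simp
  · intro A _; simp
  · intro A hA
    have hint : Aᶜ ∩ T = T \ A := by
      ext y; simp [Finset.mem_sdiff, and_comm]
    have hcard : (T ∩ A).card + (T \ A).card = T.card := Finset.card_inter_add_card_sdiff T A
    have hAT : (A ∩ T).card = (T ∩ A).card := by rw [Finset.inter_comm]
    rw [hint, hAT]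
    have : T.card = (T \ A).card + (T ∩ A).card := by omega
    rw [this, pow_add]
    have hone : (-1 : ℝ) ^ (T ∩ A).card * (-1 : ℝ) ^ (T ∩ A).card = 1 := by
      rw [← pow_add, ← two_mul, pow_mul]; norm_num
    rw [mul_assoc, hone, mul_one]

theorem stmt_14 {d : ℕ} (t : ℕ) (v : Fin d → Bool) (T : Finset (Fin d)) :
    (∑ x, fv t v x * ∏ i ∈ T, (sgnB (x i) : ℝ)) / 2 ^ d =
      (∏ i ∈ T, (sgnB (v i) : ℝ)) * (-1) ^ T.card * (1 / 2 ^ d) *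
        ∑ s ∈ Finset.Icc t d, (d.choose s : ℝ) * krav d s T.card := by
  classical
  set χ : ℝ := ∏ i ∈ T, (sgnB (v i) : ℝ) with hχ
  -- the equivalence between hypercube points and subsets (of disagreement with v)
  set e : (Fin d → Bool) ≃ Finset (Fin d) :=
    { toFun := fun x => univ.filter (fun i => x i ≠ v i)
      invFun := fun S => fun i => if i ∈ S then !(v i) else v i
      left_inv := by
        intro x; funext i
        by_cases h : x i = v i
        · simp [h]
        · simp only [Finset.mem_filter, Finset.mem_univ, true_and, h, not_false_iff, if_pos]
          revert h; cases v i <;> cases x i <;> simp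
      right_inv := by
        intro S; ext i
        simp only [Finset.mem_filter, Finset.mem_univ, true_and]
        by_cases h : i ∈ S
        · simp only [h, if_pos, iff_true]
          cases v i <;> simp
        · simp [h] } with he
  have hdot : ∀ x : Fin d → Bool,
      dotB v x = (d : ℤ) - 2 * ((univ.filter fun i => x i ≠ v i).card : ℤ) := by
    intro x
    have h1 : ∀ i : Fin d, sgnB (v i) * sgnB (x i) = if x i ≠ v i then (-1 : ℤ) else 1 := by
      intro i; cases hv : v i <;> cases hx : x i <;> simp [sgnB]
    rw [dotB, Finset.sum_congr rfl fun i _ => h1 i, Finset.sum_ite, Finset.sum_const,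
      Finset.sum_const]
    have h2 := Finset.card_filter_add_card_filter_not
      (s := (univ : Finset (Fin d))) (p := fun i => x i ≠ v i)
    rw [Finset.card_univ, Fintype.card_fin] at h2
    simp only [nsmul_eq_mul, smul_eq_mul, mul_one, mul_neg_one]
    omega
  have hprod : ∀ x : Fin d → Bool,
      (∏ i ∈ T, (sgnB (x i) : ℝ)) =
        χ * (-1 : ℝ) ^ (((univ.filter fun i => x i ≠ v i) ∩ T).card) := by
    intro x
    have h1 : ∀ i : Fin d, (sgnB (x i) : ℝ) =
        (sgnB (v i) : ℝ) * (if x i ≠ v i then (-1 : ℝ) else 1) := by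
      intro i; cases hv : v i <;> cases hx : x i <;> simp [sgnB]
    rw [Finset.prod_congr rfl fun i _ => h1 i, Finset.prod_mul_distrib, ← hχ]
    congr 1
    rw [Finset.prod_ite, Finset.prod_const, Finset.prod_const_one, mul_one]
    congr 1
    congr 1
    ext i
    simp [Finset.mem_filter, and_comm]
  -- main reindexing
  have key : (∑ x, fv t v x * ∏ i ∈ T, (sgnB (x i) : ℝ))
      = χ * ∑ S : Finset (Fin d),
          (if t + S.card ≤ d then (-1 : ℝ) ^ ((S ∩ T).card) else 0) := by
    rw [Finset.mul_sum]
    apply Fintype.sum_equiv e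
    intro x
    have hex : e x = univ.filter (fun i => x i ≠ v i) := rfl
    rw [hex, fv, hdot x, hprod x]
    have hiff : (2 * (t : ℤ) - d ≤ (d : ℤ) - 2 * ((univ.filter fun i => x i ≠ v i).card : ℤ))
        ↔ t + (univ.filter fun i => x i ≠ v i).card ≤ d := by
      omega
    by_cases h : t + (univ.filter fun i => x i ≠ v i).card ≤ d
    · rw [if_pos (hiff.mpr h), if_pos h]; ring
    · rw [if_neg (fun hc => h (hiff.mp hc)), if_neg h]; ring
  -- group by cardinality
  have hgroup : (∑ S : Finset (Fin d),
        (if t + S.card ≤ d then (-1 : ℝ) ^ ((S ∩ T).card) else 0))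
      = ∑ a ∈ Finset.range (d + 1),
          (if t + a ≤ d then
            ∑ A ∈ powersetCard a (univ : Finset (Fin d)), (-1 : ℝ) ^ ((A ∩ T).card)
          else 0) := by
    have hinner : ∀ a : ℕ, (∑ S ∈ powersetCard a (univ : Finset (Fin d)),
        (if t + S.card ≤ d then (-1 : ℝ) ^ ((S ∩ T).card) else 0))
        = (if t + a ≤ d then
            ∑ A ∈ powersetCard a (univ : Finset (Fin d)), (-1 : ℝ) ^ ((A ∩ T).card)
          else 0) := by
      intro a
      have h : ∀ S ∈ powersetCard a (univ : Finset (Fin d)),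
          (if t + S.card ≤ d then (-1 : ℝ) ^ ((S ∩ T).card) else 0)
          = (if t + a ≤ d then (-1 : ℝ) ^ ((S ∩ T).card) else 0) := by
        intro S hS
        rw [mem_powersetCard_univ] at hS
        rw [hS]
      rw [Finset.sum_congr rfl h]
      by_cases h2 : t + a ≤ d <;> simp [h2]
    calc (∑ S : Finset (Fin d), (if t + S.card ≤ d then (-1 : ℝ) ^ ((S ∩ T).card) else 0))
        = ∑ S ∈ (univ : Finset (Fin d)).powerset,
            (if t + S.card ≤ d then (-1 : ℝ) ^ ((S ∩ T).card) else 0) := by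
          rw [Finset.powerset_univ]
      _ = ∑ a ∈ Finset.range ((univ : Finset (Fin d)).card + 1),
            ∑ S ∈ powersetCard a (univ : Finset (Fin d)),
              (if t + S.card ≤ d then (-1 : ℝ) ^ ((S ∩ T).card) else 0) := by
          rw [Finset.sum_powerset]
      _ = ∑ a ∈ Finset.range (d + 1),
            ∑ S ∈ powersetCard a (univ : Finset (Fin d)),
              (if t + S.card ≤ d then (-1 : ℝ) ^ ((S ∩ T).card) else 0) := by
          rw [Finset.card_univ, Fintype.card_fin]
      _ = _ := Finset.sum_congr rfl fun a _ => hinner a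
  -- the right-hand side sum
  have hRHS : (-1 : ℝ) ^ T.card * (∑ s ∈ Finset.Icc t d, (d.choose s : ℝ) * krav d s T.card)
      = ∑ a ∈ Finset.range (d + 1),
          (if t + a ≤ d then
            ∑ A ∈ powersetCard a (univ : Finset (Fin d)), (-1 : ℝ) ^ ((A ∩ T).card)
          else 0) := by
    rw [Finset.mul_sum]
    have h1 : ∀ s ∈ Finset.Icc t d,
        (-1 : ℝ) ^ T.card * ((d.choose s : ℝ) * krav d s T.card)
        = ∑ A ∈ powersetCard (d - s) (univ : Finset (Fin d)), (-1 : ℝ) ^ ((A ∩ T).card) := by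
      intro s hs
      have hsd : s ≤ d := (Finset.mem_Icc.mp hs).2
      rw [choose_mul_krav s hsd T, neg_pow_mul_G s hsd T]
    rw [Finset.sum_congr rfl h1, ← Finset.sum_filter]
    refine Finset.sum_bij' (fun s _ => d - s) (fun a _ => d - a) ?_ ?_ ?_ ?_ ?_
    · intro s hs
      rw [Finset.mem_Icc] at hs
      simp only [Finset.mem_filter, Finset.mem_range]
      omega
    · intro a ha
      simp only [Finset.mem_filter, Finset.mem_range] at ha
      rw [Finset.mem_Icc]
      omega
    · intro s hs
      rw [Finset.mem_Icc] at hs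
      omega
    · intro a ha
      simp only [Finset.mem_filter, Finset.mem_range] at ha
      omega
    · intro s _
      rfl
  rw [key, hgroup, ← hRHS]
  ring
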